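/- Let s: F → S be a sampling morphism of cellular sheaves on a finite abstract simplicial complex X, where S is supported on a closed subcomplex Y and s is surjective on every stalk. If H^0(X; F_Y) ≠ 0, then the induced map H^0(X;F) → H^0(X;S) on global sections is not injective. -/

import Mathlib

open Finset

/-- A cellular sheaf of real vector spaces on the full simplex category of `Finset V`. -/
structure CellSheaf (V : Type) [LinearOrder V] where
  stalk : Finset V → Type
  addCommGroup : ∀ a, AddCommGroup (stalk a)
  module : ∀ a, @Module ℝ (stalk a) _ (addCommGroup a).toAddCommMonoid
  res : ∀ a b : Finset V, a ⊆ b → stalk a →ₗ[ℝ] stalk b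
  res_refl : ∀ a, res a a (subset_refl a) = LinearMap.id
  res_trans : ∀ a b c (hab : a ⊆ b) (hbc : b ⊆ c),
    (res b c hbc).comp (res a b hab) = res a c (hab.trans hbc)

attribute [instance] CellSheaf.addCommGroup CellSheaf.module

variable {V : Type} [LinearOrder V]

/-- An abstract simplicial complex: a set of faces closed under taking subsets. -/
def IsComplex (X : Set (Finset V)) : Prop :=
  ∀ ⦃a b : Finset V⦄, b ∈ X → a ⊆ b → a ∈ X

/-- The type of `k`-dimensional faces of `X` (having `k+1` vertices). -/
abbrev kFace (X : Set (Finset V)) (k : ℕ) : Type := {a : Finset V // a ∈ X ∧ a.card = k + 1}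

/-- The `k`-cochain space of a cellular sheaf. -/
abbrev Cochain (F : CellSheaf V) (X : Set (Finset V)) (k : ℕ) : Type :=
  Π a : kFace X k, F.stalk a.1

/-- The orientation index `[b : b.erase v]`, as a real sign. -/
noncomputable def osign (b : Finset V) (v : V) : ℝ :=
  (-1 : ℝ) ^ (List.idxOf v (b.sort (· ≤ ·)))

/-- The coboundary map of a cellular sheaf on a simplicial complex. -/
noncomputable def dmap (F : CellSheaf V) (X : Set (Finset V)) (hX : IsComplex X) (k : ℕ) :
    Cochain F X k →ₗ[ℝ] Cochain F X (k + 1) where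
  toFun s := fun b => ∑ v ∈ b.1.attach,
    osign b.1 v.1 • (F.res (b.1.erase v.1) b.1 (Finset.erase_subset _ _)
      (s ⟨b.1.erase v.1, hX b.2.1 (Finset.erase_subset _ _), by
        rw [Finset.card_erase_of_mem v.2]; have := b.2.2; omega⟩))
  map_add' s t := by
    funext b
    simp only [Pi.add_apply, map_add, smul_add, Finset.sum_add_distrib]
  map_smul' c s := by
    funext b
    simp only [Pi.smul_apply, map_smul, RingHom.id_apply, Finset.smul_sum, smul_comm c]

variable (F : CellSheaf V)

/-- The submodule of a stalk consisting of elements that vanish if the face lies in `Y`. -/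
def vanishingSub (F : CellSheaf V) (Y : Set (Finset V)) (a : Finset V) :
    Submodule ℝ (F.stalk a) where
  carrier := {x | a ∈ Y → x = 0}
  add_mem' := by intro x y hx hy h; simp [hx h, hy h]
  zero_mem' := by intro _; rfl
  smul_mem' := by intro c x hx h; simp [hx h]

lemma vanishing_maps (F : CellSheaf V) {Y : Set (Finset V)} (hY : IsComplex Y)
    {a b : Finset V} (hab : a ⊆ b) :
    ∀ x ∈ vanishingSub F Y a, F.res a b hab x ∈ vanishingSub F Y b := by
  intro x hx hbY
  have : x = 0 := hx (hY hbY hab)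
  simp [this]

/-- The kernel sheaf `F_Y` of the canonical surjection `F → F^Y`: its stalks vanish on the
closed subcomplex `Y` and agree with those of `F` elsewhere. -/
def kerSheaf (F : CellSheaf V) (Y : Set (Finset V)) (hY : IsComplex Y) : CellSheaf V where
  stalk a := vanishingSub F Y a
  addCommGroup a := inferInstance
  module a := inferInstance
  res a b hab := (F.res a b hab).restrict (vanishing_maps F hY hab)
  res_refl a := by
    ext x
    simp [LinearMap.restrict_apply, F.res_refl a]
  res_trans a b c hab hbc := by
    ext x
    have h := congrArg (fun f : F.stalk a →ₗ[ℝ] F.stalk c => f x.1) (F.res_trans a b c hab hbc)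
    simp only [LinearMap.coe_comp, Function.comp_apply] at h
    simp only [LinearMap.coe_comp, Function.comp_apply, LinearMap.restrict_apply]
    exact h


/-- A morphism of cellular sheaves over the identity simplicial map. -/
structure SheafHom {V : Type} [LinearOrder V] (F G : CellSheaf V) where
  app : ∀ a : Finset V, F.stalk a →ₗ[ℝ] G.stalk a
  comm : ∀ (a b : Finset V) (h : a ⊆ b),
    (G.res a b h).comp (app a) = (app b).comp (F.res a b h)

/-- The map induced on `k`-cochains by a sheaf morphism. -/
def cochainMap {V : Type} [LinearOrder V] {F G : CellSheaf V} (m : SheafHom F G)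
    (X : Set (Finset V)) (k : ℕ) : Cochain F X k →ₗ[ℝ] Cochain G X k where
  toFun s := fun a => m.app a.1 (s a)
  map_add' s t := by funext a; simp
  map_smul' c s := by funext a; simp

/-- sampling obstruction theorem: if `s : F → S` is a sampling morphism on a
finite abstract simplicial complex `X` with `S` supported on a closed subcomplex `Y`, and
`H^0(X; F_Y) ≠ 0`, then the induced map `H^0(X;F) → H^0(X;S)` on global sections is not
injective. -/
theorem sampling_obstruction (V : Type) [LinearOrder V] (F S : CellSheaf V)
    (X Y : Set (Finset V)) (hX : IsComplex X) (hY : IsComplex Y) (hYX : Y ⊆ X)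
    (hfin : X.Finite)
    (s : SheafHom F S)
    (hsurj : ∀ a : Finset V, Function.Surjective (s.app a))
    (hsupp : ∀ a : Finset V, a ∉ Y → Subsingleton (S.stalk a))
    (hobs : LinearMap.ker (dmap (kerSheaf F Y hY) X hX 0) ≠ ⊥) :
    ¬ Set.InjOn (cochainMap s X 0)
        (LinearMap.ker (dmap F X hX 0) : Set (Cochain F X 0)) := by
  -- get a nonzero cocycle z of the kernel sheaf
  obtain ⟨z, hzker, hzne⟩ := (Submodule.ne_bot_iff _).mp hobs
  -- include it into F
  set w : Cochain F X 0 := fun a => (z a).1 with hw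
  have hwker : w ∈ LinearMap.ker (dmap F X hX 0) := by
    rw [LinearMap.mem_ker]
    funext b
    have hz := congrFun (LinearMap.mem_ker.mp hzker) b
    have := congrArg (Subtype.val) hz
    dsimp only [dmap, LinearMap.coe_mk, AddHom.coe_mk] at this
    erw [Submodule.coe_sum] at this
    exact this
  have hwne : w ≠ 0 := by
    intro h
    apply hzne
    funext a
    exact Subtype.ext (congrFun h a)
  intro hinj
  apply hwne
  have h0 : (0 : Cochain F X 0) ∈ (LinearMap.ker (dmap F X hX 0) : Set (Cochain F X 0)) := by
    simp [LinearMap.mem_ker]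
  apply hinj hwker h0
  have : cochainMap s X 0 w = 0 := by
    funext a
    by_cases hmem : a.1 ∈ Y
    · have hz0 : (z a).1 = 0 := (z a).2 hmem
      simp [cochainMap, hw, hz0]
    · haveI := hsupp a.1 hmem
      exact Subsingleton.elim _ _
  simp [this]
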